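/- Let H be a 3-uniform hypergraph on n vertices with minimum codegree at least ⌊n/3⌋. Then H has at most two tight components. -/

import Mathlib

open Finset

/-- Two edges are in the same tight component of the `3`-uniform hypergraph with edge
set `E` iff they are related by the reflexive-transitive closure of the relation
"both are edges and they share exactly 2 vertices". -/
def TightRel {V : Type*} [DecidableEq V] (E : Finset (Finset V)) :
    Finset V → Finset V → Prop :=
  Relation.ReflTransGen (fun e f => e ∈ E ∧ f ∈ E ∧ (e ∩ f).card = 2)

namespace TightAux

variable {V : Type*} [Fintype V] [DecidableEq V] {E : Finset (Finset V)}

lemma tr_symm {e f : Finset V} (h : TightRel E e f) : TightRel E f e :=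
  haveI : Std.Symm (fun e f : Finset V => e ∈ E ∧ f ∈ E ∧ (e ∩ f).card = 2) :=
    ⟨fun _ _ hab => ⟨hab.2.1, hab.1, by rw [Finset.inter_comm]; exact hab.2.2⟩⟩
  (Relation.ReflTransGen.symmetric
    (r := fun e f => e ∈ E ∧ f ∈ E ∧ (e ∩ f).card = 2)).symm _ _ h

lemma tr_trans {e f g : Finset V} (h1 : TightRel E e f) (h2 : TightRel E f g) :
    TightRel E e g :=
  Relation.ReflTransGen.trans h1 h2

/-- codegree neighbourhood of the pair `(u,v)` -/
def codN (E : Finset (Finset V)) (u v : V) : Finset V :=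
  univ.filter (fun w => ({u, v, w} : Finset V) ∈ E)

lemma mem_codN {u v w : V} : w ∈ codN E u v ↔ ({u, v, w} : Finset V) ∈ E := by
  simp [codN]

lemma edge_ne (hunif : ∀ e ∈ E, e.card = 3) {u v w : V}
    (h : ({u, v, w} : Finset V) ∈ E) : w ≠ u ∧ w ≠ v ∧ u ≠ v := by
  have h3 := hunif _ h
  refine ⟨?_, ?_, ?_⟩ <;> rintro rfl
  · have he : ({w, v, w} : Finset V) = {v, w} := by ext z; simp; try tauto
    rw [he] at h3
    have h2 : ({v, w} : Finset V).card ≤ 2 := (card_insert_le _ _).trans (by simp)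
    omega
  · have he : ({u, w, w} : Finset V) = {u, w} := by ext z; simp; try tauto
    rw [he] at h3
    have h2 : ({u, w} : Finset V).card ≤ 2 := (card_insert_le _ _).trans (by simp)
    omega
  · have he : ({u, u, w} : Finset V) = {u, w} := by ext z; simp; try tauto
    rw [he] at h3
    have h2 : ({u, w} : Finset V).card ≤ 2 := (card_insert_le _ _).trans (by simp)
    omega

lemma not_mem_codN_left (hunif : ∀ e ∈ E, e.card = 3) (u v : V) : u ∉ codN E u v :=
  fun h => (edge_ne hunif (mem_codN.mp h)).1 rfl

lemma not_mem_codN_right (hunif : ∀ e ∈ E, e.card = 3) (u v : V) : v ∉ codN E u v :=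
  fun h => (edge_ne hunif (mem_codN.mp h)).2.1 rfl

lemma card_codN
    (hcod : ∀ u v : V, u ≠ v →
      Fintype.card V / 3 ≤ (univ.filter (fun w => ({u, v, w} : Finset V) ∈ E)).card)
    {u v : V} (huv : u ≠ v) : Fintype.card V / 3 ≤ (codN E u v).card :=
  hcod u v huv

lemma rel_of_inter (hunif : ∀ e ∈ E, e.card = 3) {f g : Finset V} (hf : f ∈ E) (hg : g ∈ E)
    (h2 : 2 ≤ (f ∩ g).card) : TightRel E f g := by
  by_cases heq : f = g
  · exact heq ▸ Relation.ReflTransGen.refl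
  · have hle : (f ∩ g).card ≤ 3 := by
      have h' := card_le_card (inter_subset_left : f ∩ g ⊆ f)
      rw [hunif f hf] at h'
      exact h'
    have hne : (f ∩ g).card ≠ 3 := by
      intro h3
      have h1 : f ∩ g = f :=
        eq_of_subset_of_card_le inter_subset_left (by rw [hunif f hf, h3])
      have h2' : f ∩ g = g :=
        eq_of_subset_of_card_le inter_subset_right (by rw [hunif g hg, h3])
      exact heq (h1.symm.trans h2')
    have : (f ∩ g).card = 2 := by omega
    exact Relation.ReflTransGen.single ⟨hf, hg, this⟩

lemma pair_rel (hunif : ∀ e ∈ E, e.card = 3) {f g : Finset V} {u v : V}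
    (hf : f ∈ E) (hg : g ∈ E) (huv : u ≠ v)
    (huf : u ∈ f) (hvf : v ∈ f) (hug : u ∈ g) (hvg : v ∈ g) : TightRel E f g := by
  apply rel_of_inter hunif hf hg
  have hsub : ({u, v} : Finset V) ⊆ f ∩ g := by
    intro z hz
    rcases mem_insert.mp hz with rfl | hz
    · exact mem_inter.mpr ⟨huf, hug⟩
    · rw [mem_singleton] at hz
      subst hz
      exact mem_inter.mpr ⟨hvf, hvg⟩
  calc (2 : ℕ) = ({u, v} : Finset V).card := (card_pair huv).symm
    _ ≤ _ := card_le_card hsub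

lemma cover (hunif : ∀ e ∈ E, e.card = 3) {f : Finset V} {x a z : V}
    (hf : f ∈ E) (hxf : x ∈ f) (haf : a ∈ f) (hax : a ≠ x)
    (hz : z ∈ insert a (codN E x a)) :
    ∃ h ∈ E, x ∈ h ∧ z ∈ h ∧ z ≠ x ∧ TightRel E f h := by
  rcases mem_insert.mp hz with rfl | hz
  · exact ⟨f, hf, hxf, haf, hax, Relation.ReflTransGen.refl⟩
  · have he := mem_codN.mp hz
    obtain ⟨hzx, _, hxa⟩ := edge_ne hunif he
    exact ⟨{x, a, z}, he, by simp, by simp, hzx,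
      pair_rel hunif hf he hxa hxf haf (by simp) (by simp)⟩

lemma coverT (hunif : ∀ e ∈ E, e.card = 3) {e : Finset V} {u v z : V}
    (he : e ∈ E) (hu : u ∈ e) (hv : v ∈ e) (huv : u ≠ v)
    (hz : z ∈ insert u (insert v (codN E u v))) :
    ∃ f ∈ E, z ∈ f ∧ TightRel E e f := by
  rcases mem_insert.mp hz with rfl | hz
  · exact ⟨e, he, hu, Relation.ReflTransGen.refl⟩
  rcases mem_insert.mp hz with rfl | hz
  · exact ⟨e, he, hv, Relation.ReflTransGen.refl⟩
  · exact ⟨_, mem_codN.mp hz, by simp,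
      pair_rel hunif he (mem_codN.mp hz) huv hu hv (by simp) (by simp)⟩

lemma three_disj {A B C U : Finset V} (hAB : Disjoint A B) (hAC : Disjoint A C)
    (hBC : Disjoint B C) (hA : A ⊆ U) (hB : B ⊆ U) (hC : C ⊆ U) :
    A.card + B.card + C.card ≤ U.card := by
  have h1 : (A ∪ B ∪ C).card = A.card + B.card + C.card := by
    rw [card_union_of_disjoint (disjoint_union_left.mpr ⟨hAC, hBC⟩),
      card_union_of_disjoint hAB]
  rw [← h1]
  exact card_le_card (union_subset (union_subset hA hB) hC)

/-- triangle counting : three pairwise unrelated "colours" on the three pairs of a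
triangle `x p z` is impossible. -/
lemma tri (hunif : ∀ e ∈ E, e.card = 3)
    (hcod : ∀ u v : V, u ≠ v →
      Fintype.card V / 3 ≤ (univ.filter (fun w => ({u, v, w} : Finset V) ∈ E)).card)
    {g h k : Finset V} {x p z : V} (hg : g ∈ E) (hh : h ∈ E) (hk : k ∈ E)
    (hxp : x ≠ p) (hxz : x ≠ z) (hpz : p ≠ z)
    (hxg : x ∈ g) (hpg : p ∈ g) (hxh : x ∈ h) (hzh : z ∈ h) (hpk : p ∈ k) (hzk : z ∈ k)
    (ngh : ¬TightRel E g h) (ngk : ¬TightRel E g k) (nhk : ¬TightRel E h k) : False := by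
  have hU : (univ \ ({x, p, z} : Finset V)).card = Fintype.card V - 3 := by
    rw [card_sdiff_of_subset (subset_univ _), card_univ]
    congr 1
    rw [card_insert_of_notMem (by simp [hxp, hxz]),
      card_insert_of_notMem (by simp [hpz]), card_singleton]
  have hA : codN E x p ⊆ univ \ ({x, p, z} : Finset V) := by
    intro w hw
    have he := mem_codN.mp hw
    obtain ⟨hwx, hwp, _⟩ := edge_ne hunif he
    have hwz : w ≠ z := by
      rintro rfl
      exact ngh (tr_trans
        (tr_symm (pair_rel hunif he hg hxp (by simp) (by simp) hxg hpg))
        (pair_rel hunif he hh hxz (by simp) (by simp) hxh hzh))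
    simp [hwx, hwp, hwz]
  have hB : codN E x z ⊆ univ \ ({x, p, z} : Finset V) := by
    intro w hw
    have he := mem_codN.mp hw
    obtain ⟨hwx, hwz, _⟩ := edge_ne hunif he
    have hwp : w ≠ p := by
      rintro rfl
      exact ngh (tr_trans
        (tr_symm (pair_rel hunif he hg hxp (by simp) (by simp) hxg hpg))
        (pair_rel hunif he hh hxz (by simp) (by simp) hxh hzh))
    simp [hwx, hwp, hwz]
  have hC : codN E p z ⊆ univ \ ({x, p, z} : Finset V) := by
    intro w hw
    have he := mem_codN.mp hw
    obtain ⟨hwp, hwz, _⟩ := edge_ne hunif he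
    have hwx : w ≠ x := by
      rintro rfl
      exact ngk (tr_trans
        (tr_symm (pair_rel hunif he hg hxp (by simp) (by simp) hxg hpg))
        (pair_rel hunif he hk hpz (by simp) (by simp) hpk hzk))
    simp [hwx, hwp, hwz]
  have dAB : Disjoint (codN E x p) (codN E x z) := by
    rw [disjoint_left]
    intro w hw1 hw2
    have he1 := mem_codN.mp hw1
    have he2 := mem_codN.mp hw2
    obtain ⟨hwx, _, _⟩ := edge_ne hunif he1
    exact ngh (tr_trans
      (tr_symm (pair_rel hunif he1 hg hxp (by simp) (by simp) hxg hpg))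
      (tr_trans
        (pair_rel hunif he1 he2 (Ne.symm hwx) (by simp) (by simp) (by simp) (by simp))
        (pair_rel hunif he2 hh hxz (by simp) (by simp) hxh hzh)))
  have dAC : Disjoint (codN E x p) (codN E p z) := by
    rw [disjoint_left]
    intro w hw1 hw2
    have he1 := mem_codN.mp hw1
    have he2 := mem_codN.mp hw2
    obtain ⟨_, hwp, _⟩ := edge_ne hunif he1
    exact ngk (tr_trans
      (tr_symm (pair_rel hunif he1 hg hxp (by simp) (by simp) hxg hpg))
      (tr_trans
        (pair_rel hunif he1 he2 (Ne.symm hwp) (by simp) (by simp) (by simp) (by simp))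
        (pair_rel hunif he2 hk hpz (by simp) (by simp) hpk hzk)))
  have dBC : Disjoint (codN E x z) (codN E p z) := by
    rw [disjoint_left]
    intro w hw1 hw2
    have he1 := mem_codN.mp hw1
    have he2 := mem_codN.mp hw2
    obtain ⟨_, hwz, _⟩ := edge_ne hunif he1
    exact nhk (tr_trans
      (tr_symm (pair_rel hunif he1 hh hxz (by simp) (by simp) hxh hzh))
      (tr_trans
        (pair_rel hunif he1 he2 (Ne.symm hwz) (by simp) (by simp) (by simp) (by simp))
        (pair_rel hunif he2 hk hpz (by simp) (by simp) hpk hzk)))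
  have dA : Fintype.card V / 3 ≤ (codN E x p).card := card_codN hcod hxp
  have dB : Fintype.card V / 3 ≤ (codN E x z).card := card_codN hcod hxz
  have dC : Fintype.card V / 3 ≤ (codN E p z).card := card_codN hcod hpz
  have h3 : 3 ≤ Fintype.card V := by
    have := card_le_univ g
    rw [hunif g hg] at this
    exact this
  have := three_disj dAB dAC dBC hA hB hC
  rw [hU] at this
  omega

lemma disj_SS (hunif : ∀ e ∈ E, e.card = 3) {f g : Finset V} {x a b : V}
    (hf : f ∈ E) (hg : g ∈ E) (hxf : x ∈ f) (haf : a ∈ f) (hax : a ≠ x)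
    (hxg : x ∈ g) (hbg : b ∈ g) (hbx : b ≠ x) (nfg : ¬TightRel E f g) :
    Disjoint (insert a (codN E x a)) (insert b (codN E x b)) := by
  rw [disjoint_left]
  intro z hz1 hz2
  obtain ⟨h1, hh1, hxh1, hzh1, hzx, hr1⟩ := cover hunif hf hxf haf hax hz1
  obtain ⟨h2, hh2, hxh2, hzh2, _, hr2⟩ := cover hunif hg hxg hbg hbx hz2
  exact nfg (tr_trans hr1 (tr_trans
    (pair_rel hunif hh1 hh2 (Ne.symm hzx) hxh1 hzh1 hxh2 hzh2) (tr_symm hr2)))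

/-- every edge through a vertex `x` covered by two unrelated edges `f₁ f₂` is related
to `f₁` or `f₂`. -/
lemma claimX (hunif : ∀ e ∈ E, e.card = 3)
    (hcod : ∀ u v : V, u ≠ v →
      Fintype.card V / 3 ≤ (univ.filter (fun w => ({u, v, w} : Finset V) ∈ E)).card)
    {x : V} {f₁ f₂ g : Finset V} (hf₁ : f₁ ∈ E) (hf₂ : f₂ ∈ E) (hgE : g ∈ E)
    (hx1 : x ∈ f₁) (hx2 : x ∈ f₂) (hxg : x ∈ g)
    (h12 : ¬TightRel E f₁ f₂) : TightRel E f₁ g ∨ TightRel E f₂ g := by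
  by_contra hc
  push_neg at hc
  obtain ⟨n1, n2⟩ := hc
  obtain ⟨a, ha⟩ : (f₁.erase x).Nonempty := by
    rw [← card_pos, card_erase_of_mem hx1, hunif f₁ hf₁]; norm_num
  obtain ⟨hax, haf⟩ := mem_erase.mp ha
  obtain ⟨b, hb⟩ : (f₂.erase x).Nonempty := by
    rw [← card_pos, card_erase_of_mem hx2, hunif f₂ hf₂]; norm_num
  obtain ⟨hbx, hbf⟩ := mem_erase.mp hb
  obtain ⟨c, hcc⟩ : (g.erase x).Nonempty := by
    rw [← card_pos, card_erase_of_mem hxg, hunif g hgE]; norm_num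
  obtain ⟨hcx, hcg⟩ := mem_erase.mp hcc
  have d12 := disj_SS hunif hf₁ hf₂ hx1 haf hax hx2 hbf hbx h12
  have d13 := disj_SS hunif hf₁ hgE hx1 haf hax hxg hcg hcx n1
  have d23 := disj_SS hunif hf₂ hgE hx2 hbf hbx hxg hcg hcx n2
  have hsub : ∀ y : V, y ≠ x → insert y (codN E x y) ⊆ univ.erase x := by
    intro y hyx z hz
    rcases mem_insert.mp hz with rfl | hz
    · exact mem_erase.mpr ⟨hyx, mem_univ _⟩
    · exact mem_erase.mpr ⟨(edge_ne hunif (mem_codN.mp hz)).1, mem_univ _⟩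
  have cardS : ∀ y : V, y ≠ x →
      Fintype.card V / 3 + 1 ≤ (insert y (codN E x y)).card := by
    intro y hyx
    rw [card_insert_of_notMem (not_mem_codN_right hunif x y)]
    have := card_codN hcod (Ne.symm hyx) (u := x) (v := y)
    omega
  have hU : (univ.erase x).card = Fintype.card V - 1 := by
    rw [card_erase_of_mem (mem_univ x), card_univ]
  have h3 : 3 ≤ Fintype.card V := by
    have := card_le_univ f₁
    rw [hunif f₁ hf₁] at this
    exact this
  have htot := three_disj d12 d13 d23 (hsub a hax) (hsub b hbx) (hsub c hcx)
  rw [hU] at htot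
  have c1 := cardS a hax
  have c2 := cardS b hbx
  have c3 := cardS c hcx
  omega

lemma finalCount (hunif : ∀ e ∈ E, e.card = 3)
    (hcod : ∀ u v : V, u ≠ v →
      Fintype.card V / 3 ≤ (univ.filter (fun w => ({u, v, w} : Finset V) ∈ E)).card)
    {g h k : Finset V} {x p b q : V}
    (hg : g ∈ E) (hh : h ∈ E) (hk : k ∈ E) (hxp : x ≠ p)
    (hxg : x ∈ g) (hpg : p ∈ g) (hxh : x ∈ h) (hbh : b ∈ h) (hbx : b ≠ x)
    (hpk : p ∈ k) (hqk : q ∈ k) (hqp : q ≠ p)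
    (ngh : ¬TightRel E g h) (ngk : ¬TightRel E g k) (nhk : ¬TightRel E h k) : False := by
  have hU : (univ \ ({x, p} : Finset V)).card = Fintype.card V - 2 := by
    rw [card_sdiff_of_subset (subset_univ _), card_univ, card_pair hxp]
  have hA : codN E x p ⊆ univ \ ({x, p} : Finset V) := by
    intro w hw
    have he := mem_codN.mp hw
    obtain ⟨hwx, hwp, _⟩ := edge_ne hunif he
    simp [hwx, hwp]
  have hB : insert b (codN E x b) ⊆ univ \ ({x, p} : Finset V) := by
    intro z hz
    obtain ⟨h', hh', hxh', hzh', hzx, hrel⟩ := cover hunif hh hxh hbh hbx hz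
    have hzp : z ≠ p := by
      rintro rfl
      exact ngh (tr_trans (pair_rel hunif hg hh' hxp hxg hpg hxh' hzh') (tr_symm hrel))
    simp [hzx, hzp]
  have hC : insert q (codN E p q) ⊆ univ \ ({x, p} : Finset V) := by
    intro z hz
    obtain ⟨k', hk', hpk', hzk', hzp, hrel⟩ := cover hunif hk hpk hqk hqp hz
    have hzx : z ≠ x := by
      rintro rfl
      exact ngk (tr_trans (pair_rel hunif hg hk' hxp hxg hpg hzk' hpk') (tr_symm hrel))
    simp [hzx, hzp]
  have dAB : Disjoint (codN E x p) (insert b (codN E x b)) := by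
    rw [disjoint_left]
    intro w hw1 hw2
    have he1 := mem_codN.mp hw1
    obtain ⟨hwx, _, _⟩ := edge_ne hunif he1
    obtain ⟨h', hh', hxh', hwh', _, hrel⟩ := cover hunif hh hxh hbh hbx hw2
    exact ngh (tr_trans
      (tr_symm (pair_rel hunif he1 hg hxp (by simp) (by simp) hxg hpg))
      (tr_trans
        (pair_rel hunif he1 hh' (Ne.symm hwx) (by simp) (by simp) hxh' hwh')
        (tr_symm hrel)))
  have dAC : Disjoint (codN E x p) (insert q (codN E p q)) := by
    rw [disjoint_left]
    intro w hw1 hw2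
    have he1 := mem_codN.mp hw1
    obtain ⟨_, hwp, _⟩ := edge_ne hunif he1
    obtain ⟨k', hk', hpk', hwk', _, hrel⟩ := cover hunif hk hpk hqk hqp hw2
    exact ngk (tr_trans
      (tr_symm (pair_rel hunif he1 hg hxp (by simp) (by simp) hxg hpg))
      (tr_trans
        (pair_rel hunif he1 hk' (Ne.symm hwp) (by simp) (by simp) hpk' hwk')
        (tr_symm hrel)))
  have dBC : Disjoint (insert b (codN E x b)) (insert q (codN E p q)) := by
    rw [disjoint_left]
    intro z hz1 hz2
    obtain ⟨h', hh', hxh', hzh', hzx, hrelh⟩ := cover hunif hh hxh hbh hbx hz1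
    obtain ⟨k', hk', hpk', hzk', hzp, hrelk⟩ := cover hunif hk hpk hqk hqp hz2
    exact tri hunif hcod hg hh' hk' hxp (Ne.symm hzx) (Ne.symm hzp)
      hxg hpg hxh' hzh' hpk' hzk'
      (fun hr => ngh (tr_trans hr (tr_symm hrelh)))
      (fun hr => ngk (tr_trans hr (tr_symm hrelk)))
      (fun hr => nhk (tr_trans hrelh (tr_trans hr (tr_symm hrelk))))
  have dA : Fintype.card V / 3 ≤ (codN E x p).card := card_codN hcod hxp
  have dB : Fintype.card V / 3 + 1 ≤ (insert b (codN E x b)).card := by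
    rw [card_insert_of_notMem (not_mem_codN_right hunif x b)]
    have := card_codN hcod (Ne.symm hbx) (u := x) (v := b)
    omega
  have dC : Fintype.card V / 3 + 1 ≤ (insert q (codN E p q)).card := by
    rw [card_insert_of_notMem (not_mem_codN_right hunif p q)]
    have := card_codN hcod (Ne.symm hqp) (u := p) (v := q)
    omega
  have h3 : 3 ≤ Fintype.card V := by
    have := card_le_univ g
    rw [hunif g hg] at this
    exact this
  have := three_disj dAB dAC dBC hA hB hC
  rw [hU] at this
  omega

lemma main (hunif : ∀ e ∈ E, e.card = 3)
    (hcod : ∀ u v : V, u ≠ v →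
      Fintype.card V / 3 ≤ (univ.filter (fun w => ({u, v, w} : Finset V) ∈ E)).card)
    {e₁ e₂ e₃ : Finset V} (he₁ : e₁ ∈ E) (he₂ : e₂ ∈ E) (he₃ : e₃ ∈ E)
    (h12 : ¬TightRel E e₁ e₂) (h13 : ¬TightRel E e₁ e₃) (h23 : ¬TightRel E e₂ e₃)
    {x : V} {f₁ f₂ : Finset V} (hf₁ : f₁ ∈ E) (hf₂ : f₂ ∈ E)
    (hx1 : x ∈ f₁) (hx2 : x ∈ f₂)
    (hr1 : TightRel E e₁ f₁) (hr2 : TightRel E e₂ f₂) : False := by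
  have n12 : ¬TightRel E f₁ f₂ := fun hrel => h12 (tr_trans hr1 (tr_trans hrel (tr_symm hr2)))
  have n13 : ¬TightRel E f₁ e₃ := fun hrel => h13 (tr_trans hr1 hrel)
  have n23 : ¬TightRel E f₂ e₃ := fun hrel => h23 (tr_trans hr2 hrel)
  have hxe₃ : x ∉ e₃ := by
    intro hmem
    rcases claimX hunif hcod hf₁ hf₂ he₃ hx1 hx2 hmem n12 with hrel | hrel
    · exact n13 hrel
    · exact n23 hrel
  obtain ⟨p, hp⟩ : e₃.Nonempty := card_pos.mp (by rw [hunif e₃ he₃]; norm_num)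
  have hxp : x ≠ p := fun hEq => hxe₃ (hEq ▸ hp)
  obtain ⟨q, hq⟩ : (e₃.erase p).Nonempty := by
    rw [← card_pos, card_erase_of_mem hp, hunif e₃ he₃]; norm_num
  obtain ⟨hqp, hqe₃⟩ := mem_erase.mp hq
  obtain ⟨b, hb⟩ : (f₂.erase x).Nonempty := by
    rw [← card_pos, card_erase_of_mem hx2, hunif f₂ hf₂]; norm_num
  obtain ⟨hbx, hbf₂⟩ := mem_erase.mp hb
  obtain ⟨a, ha⟩ : (f₁.erase x).Nonempty := by
    rw [← card_pos, card_erase_of_mem hx1, hunif f₁ hf₁]; norm_num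
  obtain ⟨hax, haf₁⟩ := mem_erase.mp ha
  have h3 : 3 ≤ Fintype.card V := by
    have := card_le_univ e₃
    rw [hunif e₃ he₃] at this
    exact this
  have hd1 : 1 ≤ Fintype.card V / 3 := by omega
  obtain ⟨w, hw⟩ : (codN E x p).Nonempty := by
    rw [← card_pos]
    have := card_codN hcod hxp (u := x) (v := p)
    omega
  have hgpE : ({x, p, w} : Finset V) ∈ E := mem_codN.mp hw
  have hxgp : x ∈ ({x, p, w} : Finset V) := by simp
  have hpgp : p ∈ ({x, p, w} : Finset V) := by simp
  rcases claimX hunif hcod hf₁ hf₂ hgpE hx1 hx2 hxgp n12 with hrel | hrel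
  · exact finalCount hunif hcod hgpE hf₂ he₃ hxp hxgp hpgp hx2 hbf₂ hbx hp hqe₃ hqp
      (fun hr => n12 (tr_trans hrel hr))
      (fun hr => n13 (tr_trans hrel hr))
      n23
  · exact finalCount hunif hcod hgpE hf₁ he₃ hxp hxgp hpgp hx1 haf₁ hax hp hqe₃ hqp
      (fun hr => n12 (tr_symm (tr_trans hrel hr)))
      (fun hr => n23 (tr_trans hrel hr))
      n13

end TightAux

open TightAux in
/-- A 3-uniform hypergraph on `n` vertices with minimum codegree at least `⌊n/3⌋` has at
most two tight components: among any three edges, two lie in a common tight component. -/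
theorem stmt2 {V : Type*} [Fintype V] [DecidableEq V] (E : Finset (Finset V))
    (hunif : ∀ e ∈ E, e.card = 3)
    (hcod : ∀ u v : V, u ≠ v →
      Fintype.card V / 3 ≤
        (Finset.univ.filter (fun w => ({u, v, w} : Finset V) ∈ E)).card) :
    ∀ e₁ ∈ E, ∀ e₂ ∈ E, ∀ e₃ ∈ E,
      TightRel E e₁ e₂ ∨ TightRel E e₁ e₃ ∨ TightRel E e₂ e₃ := by
  intro e₁ he₁ e₂ he₂ e₃ he₃
  by_contra hc
  push_neg at hc
  obtain ⟨h12, h13, h23⟩ := hc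
  obtain ⟨u₁, hu₁, v₁, hv₁, huv₁⟩ :=
    one_lt_card.mp (show 1 < e₁.card by rw [hunif e₁ he₁]; norm_num)
  obtain ⟨u₂, hu₂, v₂, hv₂, huv₂⟩ :=
    one_lt_card.mp (show 1 < e₂.card by rw [hunif e₂ he₂]; norm_num)
  obtain ⟨u₃, hu₃, v₃, hv₃, huv₃⟩ :=
    one_lt_card.mp (show 1 < e₃.card by rw [hunif e₃ he₃]; norm_num)
  have key : ∀ {ea eb ec : Finset V}, ea ∈ E → eb ∈ E → ec ∈ E →
      ¬TightRel E ea eb → ¬TightRel E ea ec → ¬TightRel E eb ec →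
      ∀ {ua va ub vb : V}, ua ∈ ea → va ∈ ea → ua ≠ va → ub ∈ eb → vb ∈ eb → ub ≠ vb →
      Disjoint (insert ua (insert va (codN E ua va)))
        (insert ub (insert vb (codN E ub vb))) := by
    intro ea eb ec hea heb hec hab hac hbc ua va ub vb hua hva huva hub hvb hubv
    rw [disjoint_left]
    intro z hz1 hz2
    obtain ⟨fa, hfa, hzfa, hra⟩ := coverT hunif hea hua hva huva hz1
    obtain ⟨fb, hfb, hzfb, hrb⟩ := coverT hunif heb hub hvb hubv hz2
    exact main hunif hcod hea heb hec hab hac hbc hfa hfb hzfa hzfb hra hrb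
  have d12 := key he₁ he₂ he₃ h12 h13 h23 hu₁ hv₁ huv₁ hu₂ hv₂ huv₂
  have d13 := key he₁ he₃ he₂ h13 h12 (fun hr => h23 (tr_symm hr)) hu₁ hv₁ huv₁ hu₃ hv₃ huv₃
  have d23 := key he₂ he₃ he₁ h23 (fun hr => h12 (tr_symm hr)) (fun hr => h13 (tr_symm hr))
    hu₂ hv₂ huv₂ hu₃ hv₃ huv₃
  have cardT : ∀ u v : V, u ≠ v →
      Fintype.card V / 3 + 2 ≤ (insert u (insert v (codN E u v))).card := by
    intro u v huv
    rw [card_insert_of_notMem (by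
        simp only [mem_insert]
        push_neg
        exact ⟨huv, not_mem_codN_left hunif u v⟩),
      card_insert_of_notMem (not_mem_codN_right hunif u v)]
    have := card_codN hcod huv (u := u) (v := v)
    omega
  have c1 := cardT u₁ v₁ huv₁
  have c2 := cardT u₂ v₂ huv₂
  have c3 := cardT u₃ v₃ huv₃
  have htot := three_disj d12 d13 d23 (subset_univ _) (subset_univ _) (subset_univ _)
  rw [card_univ] at htot
  have h3 : 3 ≤ Fintype.card V := by
    have := card_le_univ e₁
    rw [hunif e₁ he₁] at this
    exact this
  omega
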